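/- Let A, B be complex m×n matrices and Δ = A⊗B − B⊗A. If the null space of Δ has dimension one, then every element of the null space is a scalar multiple of a strongly decomposable vector x⊗x for some x ∈ ℂⁿ. -/

import Mathlib

open Matrix Kronecker

/-- Kronecker product of two vectors. -/
def kronVec {n : ℕ} (x y : Fin n → ℂ) : Fin n × Fin n → ℂ := fun p => x p.1 * y p.2

/-- Factorization of linear maps through a map with smaller kernel. -/
lemma exists_factor {K V W U : Type*} [Field K] [AddCommGroup V] [Module K V]
    [AddCommGroup W] [Module K W] [AddCommGroup U] [Module K U]
    (g : V →ₗ[K] U) (f : V →ₗ[K] W) (h : LinearMap.ker g ≤ LinearMap.ker f) :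
    ∃ H : U →ₗ[K] W, f = H.comp g := by
  obtain ⟨s, hs⟩ := g.rangeRestrict.exists_rightInverse_of_surjective
    (LinearMap.range_eq_top.2 g.surjective_rangeRestrict)
  obtain ⟨H, hH⟩ := LinearMap.exists_extend (f.comp s)
  refine ⟨H, ?_⟩
  ext v
  have h1 : g.rangeRestrict (s (g.rangeRestrict v)) = g.rangeRestrict v := by
    have := congrArg (fun φ => φ (g.rangeRestrict v)) hs
    exact this
  have h2 : g (s (g.rangeRestrict v)) = g v := by
    have := congrArg Subtype.val h1
    simpa [LinearMap.rangeRestrict] using this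
  have h3 : s (g.rangeRestrict v) - v ∈ LinearMap.ker f :=
    h (by simp [LinearMap.mem_ker, map_sub, h2])
  have h4 : f (s (g.rangeRestrict v)) = f v := by
    have := h3; rw [LinearMap.mem_ker, map_sub, sub_eq_zero] at this; exact this
  calc f v = f (s (g.rangeRestrict v)) := h4.symm
    _ = (f.comp s) (g.rangeRestrict v) := rfl
    _ = (H ∘ₗ (LinearMap.range g).subtype) (g.rangeRestrict v) := by rw [← hH]
    _ = (H.comp g) v := rfl

lemma kron_mulVec {m n : ℕ} (A B : Matrix (Fin m) (Fin n) ℂ) (z : Fin n × Fin n → ℂ)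
    (p : Fin m × Fin m) :
    ((A ⊗ₖ B) *ᵥ z) p = (A * (Matrix.of fun i j => z (i,j)) * Bᵀ) p.1 p.2 := by
  simp only [Matrix.mulVec, dotProduct, Fintype.sum_prod_type,
    Matrix.kroneckerMap_apply, Matrix.mul_apply, Matrix.transpose_apply, Matrix.of_apply,
    Finset.sum_mul, Finset.mul_sum]
  rw [Finset.sum_comm]
  congr 1; ext k; congr 1; ext l; ring

/-- membership in the kernel iff the matrix relation holds -/
lemma ker_iff {m n : ℕ} (A B : Matrix (Fin m) (Fin n) ℂ) (z : Fin n × Fin n → ℂ) :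
    z ∈ LinearMap.ker (A ⊗ₖ B - B ⊗ₖ A).mulVecLin ↔
      A * (Matrix.of fun i j => z (i,j)) * Bᵀ = B * (Matrix.of fun i j => z (i,j)) * Aᵀ := by
  rw [LinearMap.mem_ker, Matrix.mulVecLin_apply, Matrix.sub_mulVec, sub_eq_zero]
  constructor
  · intro hz
    ext i j
    have := congrFun hz (i, j)
    rw [kron_mulVec, kron_mulVec] at this
    exact this
  · intro hz
    ext p
    rw [kron_mulVec, kron_mulVec, hz]

lemma cancel_left {n r s : ℕ} {C : Matrix (Fin n) (Fin r) ℂ}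
    (hC : ∀ v, C *ᵥ v = 0 → v = 0) {X Y : Matrix (Fin r) (Fin s) ℂ}
    (h : C * X = C * Y) : X = Y := by
  ext i j
  have h1 : C *ᵥ (X *ᵥ Pi.single j 1 - Y *ᵥ Pi.single j 1) = 0 := by
    rw [Matrix.mulVec_sub, Matrix.mulVec_mulVec, Matrix.mulVec_mulVec, h, sub_self]
  have h2 := hC _ h1
  have h3 : X *ᵥ Pi.single j 1 = Y *ᵥ Pi.single j 1 := sub_eq_zero.mp (by
    ext i'; exact congrFun h2 i')
  have := congrFun h3 i
  simpa [Matrix.mulVec_single] using this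

lemma rank1_mul {m n : ℕ} (A B : Matrix (Fin m) (Fin n) ℂ) (x y : Fin n → ℂ) :
    A * (Matrix.of fun i j => x i * y j) * Bᵀ =
      Matrix.of fun i j => (A *ᵥ x) i * (B *ᵥ y) j := by
  ext i j
  simp only [Matrix.mul_apply, Matrix.transpose_apply, Matrix.of_apply, Matrix.mulVec,
    dotProduct, Finset.sum_mul, Finset.mul_sum]
  exact Finset.sum_congr rfl fun l _ => Finset.sum_congr rfl fun k _ => by ring

theorem stmt_3 {m n : ℕ} (A B : Matrix (Fin m) (Fin n) ℂ)
    (h : Module.finrank ℂ (LinearMap.ker (A ⊗ₖ B - B ⊗ₖ A).mulVecLin) = 1) :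
    ∃ x : Fin n → ℂ, ∀ z ∈ LinearMap.ker (A ⊗ₖ B - B ⊗ₖ A).mulVecLin,
      ∃ α : ℂ, z = α • kronVec x x := by
  classical
  set ker := LinearMap.ker (A ⊗ₖ B - B ⊗ₖ A).mulVecLin with hker
  -- every element of the kernel is a multiple of any fixed nonzero element
  have hmul : ∀ v, v ∈ ker → v ≠ 0 → ∀ z ∈ ker, ∃ c : ℂ, z = c • v := by
    intro v hv hvne z hz
    have hv' : (⟨v, hv⟩ : ker) ≠ 0 := by
      intro hc; apply hvne; exact congrArg Subtype.val hc
    obtain ⟨c, hc⟩ := (finrank_eq_one_iff_of_nonzero' (⟨v, hv⟩ : ker) hv').mp h ⟨z, hz⟩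
    exact ⟨c, (congrArg Subtype.val hc).symm⟩
  by_cases hP : ∃ x : Fin n → ℂ, x ≠ 0 ∧ ∃ s t : ℂ, (s ≠ 0 ∨ t ≠ 0) ∧
      s • (A *ᵥ x) = t • (B *ᵥ x)
  · -- good case: the decomposable vector spans the kernel
    obtain ⟨x, hx, s, t, hst, hdep⟩ := hP
    refine ⟨x, ?_⟩
    have hdep' : ∀ i, s * (A *ᵥ x) i = t * (B *ᵥ x) i := fun i => congrFun hdep i
    have hentry : ∀ i j, (A *ᵥ x) i * (B *ᵥ x) j = (B *ᵥ x) i * (A *ᵥ x) j := by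
      intro i j
      rcases hst with hs | ht
      · apply mul_left_cancel₀ hs
        calc s * ((A *ᵥ x) i * (B *ᵥ x) j) = (s * (A *ᵥ x) i) * (B *ᵥ x) j := by ring
          _ = (t * (B *ᵥ x) i) * (B *ᵥ x) j := by rw [hdep' i]
          _ = (B *ᵥ x) i * (t * (B *ᵥ x) j) := by ring
          _ = (B *ᵥ x) i * (s * (A *ᵥ x) j) := by rw [hdep' j]
          _ = s * ((B *ᵥ x) i * (A *ᵥ x) j) := by ring
      · apply mul_left_cancel₀ ht
        calc t * ((A *ᵥ x) i * (B *ᵥ x) j) = (A *ᵥ x) i * (t * (B *ᵥ x) j) := by ring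
          _ = (A *ᵥ x) i * (s * (A *ᵥ x) j) := by rw [hdep' j]
          _ = (s * (A *ᵥ x) i) * (A *ᵥ x) j := by ring
          _ = (t * (B *ᵥ x) i) * (A *ᵥ x) j := by rw [hdep' i]
          _ = t * ((B *ᵥ x) i * (A *ᵥ x) j) := by ring
    have hxk : kronVec x x ∈ ker := by
      rw [hker, ker_iff]
      have e1 : (Matrix.of fun i j => kronVec x x (i,j)) =
          (Matrix.of fun i j => x i * x j) := rfl
      rw [e1, rank1_mul, rank1_mul]
      ext i j
      exact hentry i j
    have hxne : kronVec x x ≠ 0 := by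
      obtain ⟨i, hi⟩ := Function.ne_iff.mp hx
      intro hc
      exact hi (by
        have := congrFun hc (i, i)
        simp only [kronVec, Pi.zero_apply] at this
        exact or_self_iff.mp (mul_eq_zero.mp this))
    intro z hz
    obtain ⟨c, hc⟩ := hmul _ hxk hxne z hz
    exact ⟨c, hc⟩
  · -- impossible case
    exfalso
    -- A is injective
    have hA : ∀ v : Fin n → ℂ, A *ᵥ v = 0 → v = 0 := by
      intro v hv
      by_contra hvne
      exact hP ⟨v, hvne, 1, 0, Or.inl one_ne_zero, by simp [hv]⟩
    -- a nonzero kernel element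
    have : Nontrivial ker := by
      rw [← Module.finrank_pos_iff (R := ℂ), h]
      exact one_pos
    obtain ⟨zs, hzs⟩ := exists_ne (0 : ker)
    set z₀ : Fin n × Fin n → ℂ := zs.val with hz₀def
    have hz₀k : z₀ ∈ ker := zs.2
    have hz₀ne : z₀ ≠ 0 := fun hc => hzs (Subtype.ext hc)
    set Z₀ : Matrix (Fin n) (Fin n) ℂ := Matrix.of fun i j => z₀ (i,j) with hZ₀def
    have hZ₀ne : Z₀ ≠ 0 := by
      intro hc
      apply hz₀ne
      funext p
      have := congrFun (congrFun hc p.1) p.2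
      simpa [Z₀] using this
    have hK0 : A * Z₀ * Bᵀ = B * Z₀ * Aᵀ := (ker_iff A B z₀).mp hz₀k
    -- transpose is in the kernel
    have hKT : A * Z₀ᵀ * Bᵀ = B * Z₀ᵀ * Aᵀ := by
      have h1 := congrArg Matrix.transpose hK0
      simp only [Matrix.transpose_mul, Matrix.transpose_transpose] at h1
      rw [Matrix.mul_assoc, Matrix.mul_assoc, ← h1]
    have hzTk : (fun p : Fin n × Fin n => z₀ (p.2, p.1)) ∈ ker := by
      rw [hker, ker_iff]
      have e1 : (Matrix.of fun i j => z₀ (j, i)) = Z₀ᵀ := by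
        ext i j; rfl
      rw [e1]; exact hKT
    obtain ⟨c, hc⟩ := hmul _ hz₀k hz₀ne _ hzTk
    have hcne : c ≠ 0 := by
      intro hc0
      apply hz₀ne
      funext p
      have := congrFun hc (p.2, p.1)
      simp only [hc0, zero_smul, Pi.zero_apply] at this
      simpa using this
    have hZT : Z₀ᵀ = c • Z₀ := by
      ext i j
      have := congrFun hc (i, j)
      simpa [Z₀] using this
    -- the column space of Z₀ and a basis of it
    set W := LinearMap.range Z₀.mulVecLin with hW
    set r := Module.finrank ℂ W with hr
    have hrpos : 0 < r := by
      rcases Nat.eq_zero_or_pos r with h0 | h0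
      · exfalso
        apply hZ₀ne
        have hbot : W = ⊥ := Submodule.finrank_eq_zero.mp (by rw [← hr]; exact h0)
        ext i j
        have hmem : Z₀ *ᵥ Pi.single j 1 ∈ W := LinearMap.mem_range_self Z₀.mulVecLin _
        rw [hbot, Submodule.mem_bot] at hmem
        have := congrFun hmem i
        simpa [Matrix.mulVec_single] using this
      · exact h0
    let b := Module.finBasis ℂ W
    set Q : Matrix (Fin n) (Fin r) ℂ := Matrix.of (fun i k => (b k : Fin n → ℂ) i) with hQ
    have hQv : ∀ y : Fin r → ℂ, Q *ᵥ y = ((∑ k, y k • b k : W) : Fin n → ℂ) := by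
      intro y
      ext i
      simp only [Matrix.mulVec, dotProduct, hQ, Matrix.of_apply]
      rw [AddSubmonoidClass.coe_finset_sum]
      rw [Finset.sum_apply]
      exact Finset.sum_congr rfl fun k _ => by
        simp [mul_comm]
    have hQ0 : ∀ y : Fin r → ℂ, Q *ᵥ y = 0 → y = 0 := by
      intro y hy
      rw [hQv] at hy
      have hsum : (∑ k, y k • b k : W) = 0 := by
        apply Subtype.ext
        simpa using hy
      have := Fintype.linearIndependent_iff.mp b.linearIndependent y hsum
      funext k; exact this k
    -- the coordinate matrix Y with Q * Y = Z₀
    have hcolmem : ∀ j, Z₀ *ᵥ Pi.single j 1 ∈ W := fun j => LinearMap.mem_range_self Z₀.mulVecLin _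
    set Y : Matrix (Fin r) (Fin n) ℂ :=
      Matrix.of (fun k j => b.repr ⟨Z₀ *ᵥ Pi.single j 1, hcolmem j⟩ k) with hY
    have hQY : Q * Y = Z₀ := by
      ext i j
      have hs := b.sum_repr ⟨Z₀ *ᵥ Pi.single j 1, hcolmem j⟩
      have hs' := congrFun (congrArg Subtype.val hs) i
      rw [AddSubmonoidClass.coe_finset_sum, Finset.sum_apply] at hs'
      simp only [Matrix.mul_apply, hQ, hY, Matrix.of_apply]
      calc (∑ k, (b k : Fin n → ℂ) i * b.repr ⟨Z₀ *ᵥ Pi.single j 1, hcolmem j⟩ k)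
          = ∑ k, ((b.repr ⟨Z₀ *ᵥ Pi.single j 1, hcolmem j⟩ k • b k : W) : Fin n → ℂ) i := by
            exact Finset.sum_congr rfl fun k _ => by simp [mul_comm]
        _ = (Z₀ *ᵥ Pi.single j 1) i := hs'
        _ = Z₀ i j := by simp [Matrix.mulVec_single]
    -- Y is surjective
    have hYs : ∀ v : Fin r → ℂ, ∃ u, Y *ᵥ u = v := by
      intro v
      obtain ⟨u, hu⟩ := (∑ k, v k • b k : W).2
      refine ⟨u, ?_⟩
      have h1 : Q *ᵥ (Y *ᵥ u) = Q *ᵥ v := by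
        rw [Matrix.mulVec_mulVec, hQY, hQv]
        exact hu
      have h2 : Q *ᵥ (Y *ᵥ u - v) = 0 := by
        rw [Matrix.mulVec_sub, h1, sub_self]
      have := hQ0 _ h2
      funext k
      have := congrFun this k
      simpa [sub_eq_zero] using this
    -- kernel of Qᵀ is contained in kernel of Y
    have hkerQT : ∀ u, Qᵀ *ᵥ u = 0 → Y *ᵥ u = 0 := by
      intro u hu
      have h1 : (Yᵀ * Qᵀ) *ᵥ u = c • (Z₀ *ᵥ u) := by
        rw [← Matrix.transpose_mul, hQY, hZT, Matrix.smul_mulVec]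
      have h2 : (Yᵀ * Qᵀ) *ᵥ u = 0 := by
        rw [← Matrix.mulVec_mulVec, hu, Matrix.mulVec_zero]
      have h3 : Z₀ *ᵥ u = 0 := by
        have := h2.symm.trans h1
        exact (smul_eq_zero.mp this.symm).resolve_left hcne
      apply hQ0
      rw [Matrix.mulVec_mulVec, hQY]
      exact h3
    -- factor Y through Qᵀ : Y = T * Qᵀ
    obtain ⟨H, hH⟩ := exists_factor (Matrix.toLin' Qᵀ) (Matrix.toLin' Y) (by
      intro u hu
      rw [LinearMap.mem_ker, Matrix.toLin'_apply] at hu ⊢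
      exact hkerQT u hu)
    set T : Matrix (Fin r) (Fin r) ℂ := LinearMap.toMatrix' H with hT
    have hYT : Y = T * Qᵀ := by
      apply Matrix.toLin'.injective
      rw [Matrix.toLin'_mul, hT, Matrix.toLin'_toMatrix']
      exact hH
    -- T is surjective, hence injective
    have hTsurj : ∀ v : Fin r → ℂ, ∃ w, T *ᵥ w = v := by
      intro v
      obtain ⟨u, hu⟩ := hYs v
      exact ⟨Qᵀ *ᵥ u, by rw [Matrix.mulVec_mulVec, ← hYT]; exact hu⟩
    have hTinj : ∀ w : Fin r → ℂ, T *ᵥ w = 0 → w = 0 := by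
      have hsurj : Function.Surjective (Matrix.toLin' T) := by
        intro v
        obtain ⟨w, hw⟩ := hTsurj v
        exact ⟨w, by rw [Matrix.toLin'_apply]; exact hw⟩
      have hinj : Function.Injective (Matrix.toLin' T) :=
        (LinearMap.injective_iff_surjective).mpr hsurj
      intro w hw
      apply hinj
      rw [Matrix.toLin'_apply, hw, map_zero]
    -- the compressed matrices
    set C : Matrix (Fin m) (Fin r) ℂ := A * Q with hCdef
    set D : Matrix (Fin m) (Fin r) ℂ := B * Q with hDdef
    have hC0 : ∀ y : Fin r → ℂ, C *ᵥ y = 0 → y = 0 := by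
      intro y hy
      rw [hCdef, ← Matrix.mulVec_mulVec] at hy
      exact hQ0 _ (hA _ hy)
    have hZ₀QTQ : Z₀ = Q * (T * Qᵀ) := by rw [← hYT, hQY]
    have hrel : C * (T * Dᵀ) = D * (T * Cᵀ) := by
      have h1 := hK0
      rw [hZ₀QTQ] at h1
      simp only [hCdef, hDdef, Matrix.transpose_mul, Matrix.mul_assoc]
      simp only [Matrix.mul_assoc] at h1
      exact h1
    -- kernel of Cᵀ is contained in kernel of Dᵀ
    have hkerCT : ∀ u, Cᵀ *ᵥ u = 0 → Dᵀ *ᵥ u = 0 := by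
      intro u hu
      have h1 : C *ᵥ (T *ᵥ (Dᵀ *ᵥ u)) = D *ᵥ (T *ᵥ (Cᵀ *ᵥ u)) := by
        simp only [Matrix.mulVec_mulVec]
        rw [← Matrix.mul_assoc, ← Matrix.mul_assoc] at hrel ⊢
        rw [hrel]
      rw [hu, Matrix.mulVec_zero, Matrix.mulVec_zero] at h1
      exact hTinj _ (hC0 _ h1)
    -- factor Dᵀ through Cᵀ : Dᵀ = G * Cᵀ
    obtain ⟨H₂, hH₂⟩ := exists_factor (Matrix.toLin' Cᵀ) (Matrix.toLin' Dᵀ) (by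
      intro u hu
      rw [LinearMap.mem_ker, Matrix.toLin'_apply] at hu ⊢
      exact hkerCT u hu)
    set G : Matrix (Fin r) (Fin r) ℂ := LinearMap.toMatrix' H₂ with hG
    have hDT : Dᵀ = G * Cᵀ := by
      apply Matrix.toLin'.injective
      rw [Matrix.toLin'_mul, hG, Matrix.toLin'_toMatrix']
      exact hH₂
    have hD : D = C * Gᵀ := by
      have := congrArg Matrix.transpose hDT
      simpa [Matrix.transpose_mul] using this
    -- the commutation relation T * G = Gᵀ * T
    have hTG : T * G = Gᵀ * T := by
      have h1 : C * ((T * G) * Cᵀ) = C * ((Gᵀ * T) * Cᵀ) := by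
        have h2 := hrel
        rw [hDT, hD] at h2
        simp only [Matrix.mul_assoc] at h2 ⊢
        exact h2
      have h3 := cancel_left hC0 h1
      have h4 : C * (T * G)ᵀ = C * (Gᵀ * T)ᵀ := by
        have := congrArg Matrix.transpose h3
        simpa [Matrix.transpose_mul, Matrix.mul_assoc] using this
      have h5 := cancel_left hC0 h4
      have := congrArg Matrix.transpose h5
      simpa using this
    -- helper rewrites
    have hDt : Qᵀ * Bᵀ = G * (Qᵀ * Aᵀ) := by
      have h1 := hDT
      simp only [hCdef, hDdef, Matrix.transpose_mul, Matrix.mul_assoc] at h1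
      exact h1
    have hTGX : ∀ X : Matrix (Fin r) (Fin m) ℂ, T * (G * X) = Gᵀ * (T * X) := by
      intro X
      rw [← Matrix.mul_assoc, hTG, Matrix.mul_assoc]
    have hBQ : B * Q = A * (Q * Gᵀ) := by
      have h1 := hD
      simp only [hCdef, hDdef, Matrix.mul_assoc] at h1
      exact h1
    -- the second kernel element
    set z₂ : Fin n × Fin n → ℂ := fun p => (Q * ((Gᵀ * T) * Qᵀ)) p.1 p.2 with hz₂
    have hz₂k : z₂ ∈ ker := by
      rw [hker, ker_iff]
      have e1 : (Matrix.of fun i j => z₂ (i,j)) = Q * ((Gᵀ * T) * Qᵀ) := rfl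
      rw [e1]
      calc A * (Q * ((Gᵀ * T) * Qᵀ)) * Bᵀ
          = A * (Q * (Gᵀ * (T * (Qᵀ * Bᵀ)))) := by simp only [Matrix.mul_assoc]
        _ = A * (Q * (Gᵀ * (T * (G * (Qᵀ * Aᵀ))))) := by rw [hDt]
        _ = A * (Q * (Gᵀ * (Gᵀ * (T * (Qᵀ * Aᵀ))))) := by rw [hTGX]
        _ = (A * (Q * Gᵀ)) * (Gᵀ * (T * (Qᵀ * Aᵀ))) := by simp only [Matrix.mul_assoc]
        _ = (B * Q) * (Gᵀ * (T * (Qᵀ * Aᵀ))) := by rw [← hBQ]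
        _ = B * (Q * ((Gᵀ * T) * Qᵀ)) * Aᵀ := by simp only [Matrix.mul_assoc]
    obtain ⟨γ, hγ⟩ := hmul _ hz₀k hz₀ne _ hz₂k
    have hM₂ : Q * ((Gᵀ * T) * Qᵀ) = Q * ((γ • T) * Qᵀ) := by
      have e2 : Q * ((Gᵀ * T) * Qᵀ) = γ • Z₀ := by
        ext i j
        have := congrFun hγ (i, j)
        simpa [z₂, Z₀] using this
      rw [e2, hZ₀QTQ, ← Matrix.mul_smul, ← Matrix.smul_mul]
    have h6 := cancel_left hQ0 hM₂
    have h7 : Q * (Gᵀ * T)ᵀ = Q * (γ • T)ᵀ := by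
      have := congrArg Matrix.transpose h6
      simpa [Matrix.transpose_mul, Matrix.mul_assoc] using this
    have h8 : Gᵀ * T = γ • T := by
      have := congrArg Matrix.transpose (cancel_left hQ0 h7)
      simpa using this
    have hGv : ∀ v : Fin r → ℂ, Gᵀ *ᵥ v = γ • v := by
      intro v
      obtain ⟨w, hw⟩ := hTsurj v
      rw [← hw, Matrix.mulVec_mulVec, h8, Matrix.smul_mulVec]
    -- derive the contradiction
    have i₀ : Fin r := ⟨0, hrpos⟩
    set y : Fin r → ℂ := Pi.single i₀ 1 with hy
    set x : Fin n → ℂ := Q *ᵥ y with hx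
    have hxne : x ≠ 0 := by
      intro hc
      have := congrFun (hQ0 y hc) i₀
      simp [hy] at this
    have hBx : B *ᵥ x = γ • (A *ᵥ x) := by
      calc B *ᵥ x = (B * Q) *ᵥ y := by rw [hx, Matrix.mulVec_mulVec]
        _ = (C * Gᵀ) *ᵥ y := by rw [← hD]
        _ = C *ᵥ (Gᵀ *ᵥ y) := by rw [Matrix.mulVec_mulVec]
        _ = C *ᵥ (γ • y) := by rw [hGv]
        _ = γ • (C *ᵥ y) := by rw [Matrix.mulVec_smul]
        _ = γ • (A *ᵥ x) := by rw [hCdef, hx, Matrix.mulVec_mulVec]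
    exact hP ⟨x, hxne, γ, 1, Or.inr one_ne_zero, by rw [one_smul]; exact hBx.symm⟩
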